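/- Let p be a prime, n ≥ 1, and let π : Fin n → Fin n be a 'parent' map and r ∈ Fin n a vertex such that π(r) = r and for every vertex i, iterating π from i eventually reaches r (the functional graph of π is a tree rooted at r with a self-loop at r). Define A ∈ Matrix (Fin n) (Fin n) (ZMod p) by A_{ij} = 1 if j = π(i) and A_{ij} = 0 otherwise. Then A is row-stochastic, its characteristic polynomial is X^{n−1}·(X−1), and the iteration x(t+1) = A x(t) achieves consensus. -/

import Mathlib

open Matrix Polynomial

/-- Rooted spanning tree construction: if `π` is a parent map whose functional
graph is a tree rooted at `r` (with `π r = r` and every vertex eventually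
reaching `r` under iteration), then the 0/1 matrix `A` with `A i j = 1` iff
`j = π i` is row-stochastic, has characteristic polynomial `X^(n-1) * (X-1)`,
and achieves consensus over `ZMod p`. -/
theorem finiteField_consensus_spanning_tree
    (p n : ℕ) [Fact p.Prime] (hn : 1 ≤ n)
    (π : Fin n → Fin n) (r : Fin n)
    (hr : π r = r) (hreach : ∀ i : Fin n, ∃ k : ℕ, π^[k] i = r)
    (A : Matrix (Fin n) (Fin n) (ZMod p))
    (hAdef : A = Matrix.of fun i j => if j = π i then (1 : ZMod p) else 0) :
    A *ᵥ (1 : Fin n → ZMod p) = 1 ∧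
    A.charpoly = X ^ (n - 1) * (X - 1) ∧
    (∀ x0 : Fin n → ZMod p, ∃ T : ℕ, ∃ α : ZMod p,
      ∀ t ≥ T, (A ^ t) *ᵥ x0 = α • (1 : Fin n → ZMod p)) := by
  have hfixiter : ∀ m : ℕ, π^[m] r = r := fun m => Function.iterate_fixed hr m
  have hnocycle : ∀ (i : Fin n) (m : ℕ), 0 < m → π^[m] i = i → i = r := by
    intro i m hm hmi
    obtain ⟨k, hk⟩ := hreach i
    have h1 : π^[m * k] i = i := by
      rw [Function.iterate_mul]
      exact Function.iterate_fixed hmi k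
    have hk' : k ≤ m * k := Nat.le_mul_of_pos_left k hm
    have h2 : π^[m * k - k] (π^[k] i) = i := by
      rw [← Function.iterate_add_apply, Nat.sub_add_cancel hk']
      exact h1
    rw [hk, hfixiter] at h2
    exact h2.symm
  have hfix : ∀ i : Fin n, π i = i ↔ i = r := fun i =>
    ⟨fun h => hnocycle i 1 one_pos (by simpa using h), fun h => h ▸ hr⟩
  have hmv : ∀ (x : Fin n → ZMod p) (i : Fin n), (A *ᵥ x) i = x (π i) := by
    intro x i
    simp [hAdef, mulVec, dotProduct, ite_mul, one_mul, zero_mul,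
      Finset.sum_ite_eq']
  have hpow : ∀ (t : ℕ) (x : Fin n → ZMod p) (i : Fin n),
      ((A ^ t) *ᵥ x) i = x (π^[t] i) := by
    intro t
    induction t with
    | zero => intro x i; simp
    | succ t ih =>
      intro x i
      rw [pow_succ', ← Matrix.mulVec_mulVec, hmv, ih,
        Function.iterate_succ_apply]
  refine ⟨?_, ?_, ?_⟩
  · funext i
    rw [hmv]
    rfl
  · -- characteristic polynomial
    have hAdiag : ∀ i, A i i = if i = r then (1 : ZMod p) else 0 := by
      intro i
      rw [hAdef]
      by_cases h : i = r
      · subst h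
        simp only [of_apply, if_pos rfl]
        rw [if_pos hr.symm]
        simp
      · simp only [of_apply]
        rw [if_neg (fun hc => h ((hfix i).mp hc.symm)), if_neg h]
    have key : ∀ σ : Equiv.Perm (Fin n), (∀ i, σ i = i ∨ σ i = π i) → σ = 1 := by
      intro σ hσ
      by_contra hne
      obtain ⟨i, hi⟩ : ∃ i, σ i ≠ i := by
        by_contra h
        push_neg at h
        exact hne (Equiv.ext h)
      have step : ∀ m : ℕ, σ^[m] i = π^[m] i ∧ σ (σ^[m] i) ≠ σ^[m] i := by
        intro m
        induction m with
        | zero => exact ⟨rfl, hi⟩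
        | succ m ih =>
          obtain ⟨h1, h2⟩ := ih
          have h3 : σ (σ^[m] i) = π (σ^[m] i) := (hσ _).resolve_left h2
          refine ⟨?_, ?_⟩
          · rw [Function.iterate_succ_apply', Function.iterate_succ_apply',
              h3, h1]
          · rw [Function.iterate_succ_apply']
            intro hcon
            exact h2 (σ.injective hcon)
      have hm : 0 < orderOf σ := orderOf_pos σ
      have hσm : σ^[orderOf σ] i = i := by
        rw [← Equiv.Perm.coe_pow, pow_orderOf_eq_one σ]
        rfl
      have hπm : π^[orderOf σ] i = i := by
        rw [← (step (orderOf σ)).1]; exact hσm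
      have hir : i = r := hnocycle i (orderOf σ) hm hπm
      subst hir
      rcases hσ i with h | h
      · exact hi h
      · exact hi (h.trans hr)
    rw [Matrix.charpoly, Matrix.det_apply]
    rw [Finset.sum_eq_single (1 : Equiv.Perm (Fin n))]
    · simp only [Equiv.Perm.sign_one, one_smul, Equiv.Perm.coe_one, id_eq]
      have h1 : ∀ i : Fin n, charmatrix A i i = if i = r then X - 1 else X := by
        intro i
        rw [charmatrix_apply_eq, hAdiag]
        by_cases h : i = r <;> simp [h]
      calc ∏ i, charmatrix A i i
          = ∏ i, (if i = r then X - 1 else X) := Finset.prod_congr rfl fun i _ => h1 i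
        _ = (if r = r then X - 1 else X) *
            ∏ i ∈ Finset.univ.erase r, (if i = r then X - 1 else X) :=
            (Finset.mul_prod_erase Finset.univ _ (Finset.mem_univ r)).symm
        _ = (X - 1) * ∏ _i ∈ Finset.univ.erase r, (X : (ZMod p)[X]) := by
            rw [if_pos rfl]
            exact congrArg _ (Finset.prod_congr rfl fun i hi =>
              if_neg (Finset.ne_of_mem_erase hi))
        _ = (X - 1) * X ^ (n - 1) := by
            rw [Finset.prod_const, Finset.card_erase_of_mem (Finset.mem_univ r),
              Finset.card_univ, Fintype.card_fin]
        _ = X ^ (n - 1) * (X - 1) := mul_comm _ _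
    · intro σ _ hσ1
      have hbad : ∃ i, σ i ≠ i ∧ π (σ i) ≠ i := by
        by_contra h
        push_neg at h
        apply hσ1
        have hinv : σ⁻¹ = 1 := by
          apply key
          intro j
          rcases eq_or_ne (σ⁻¹ j) j with h' | h'
          · exact Or.inl h'
          · right
            have hne : σ (σ⁻¹ j) ≠ σ⁻¹ j := by
              rw [show σ (σ⁻¹ j) = j from σ.apply_symm_apply j]
              exact fun hc => h' hc.symm
            have := h (σ⁻¹ j) hne
            rw [show σ (σ⁻¹ j) = j from σ.apply_symm_apply j] at this
            exact this.symm
        exact inv_eq_one.mp hinv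
      obtain ⟨i, hi1, hi2⟩ := hbad
      have hzero : charmatrix A (σ i) i = 0 := by
        rw [charmatrix_apply_ne _ _ _ hi1, hAdef]
        simp only [of_apply]
        rw [if_neg (fun hc => hi2 hc.symm)]
        simp
      have hp0 : ∏ j, charmatrix A (σ j) j = 0 :=
        Finset.prod_eq_zero (Finset.mem_univ i) hzero
      rw [hp0, smul_zero]
    · intro h
      exact absurd (Finset.mem_univ _) h
  · intro x0
    choose k hk using hreach
    refine ⟨Finset.univ.sup k, x0 r, fun t ht => ?_⟩
    funext i
    have hki : k i ≤ t := le_trans (Finset.le_sup (Finset.mem_univ i)) ht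
    have hiter : π^[t] i = r := by
      have : π^[t - k i] (π^[k i] i) = π^[t] i := by
        rw [← Function.iterate_add_apply, Nat.sub_add_cancel hki]
      rw [← this, hk, hfixiter]
    rw [hpow, hiter]
    simp
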